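/- arXiv:1602.07872 — 4 statements merged into one kernel-verified Lean document; each statement's English description precedes it below -/
import Mathlib

section
/- Let H be a real Hilbert space, let m ≥ 1 be an integer, let ω_1,…,ω_m ∈ [0,1] with ∑_{i=1}^m ω_i = 1, let C : H → H, and for each i ∈ {1,…,m} let G_i be a real Hilbert space, A_i : G_i → 2^{G_i} a set-valued operator, and L_i : H → G_i a bounded linear operator. Then for x ∈ H, the following are equivalent: (a) 0 ∈ ∑_{i=1}^m ω_i L_i* A_i(L_i x) + C x, i.e. there exist y_i ∈ A_i(L_i x) for i=1,…,m with ∑_{i=1}^m ω_i L_i* y_i + C x = 0; (b) the diagonal point (x,…,x) belongs to zer(𝐂 + 𝐋* 𝐀 𝐋 + N_𝐕), i.e. there exist u_i ∈ A_i(L_i x) and 𝐰 = (w_1,…,w_m) ∈ H^m with ∑_{i=1}^m ω_i w_i = 0 such that C x + L_i* u_i + w_i = 0 for every i. -/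
open scoped RealInnerProductSpace BigOperators

/-- Product-space reformulation of the composite primal inclusion:
`0 ∈ ∑ᵢ ωᵢ Lᵢ* Aᵢ(Lᵢ x) + C x` holds iff the diagonal point `(x,…,x)` is a zero of
`𝐂 + 𝐋* 𝐀 𝐋 + N_𝐕`, where `𝐕` is the diagonal subspace of `H^m` with the weighted inner
product (whose orthogonal complement is `{𝐰 : ∑ᵢ ωᵢ wᵢ = 0}`). -/
theorem product_space_primal_reformulation
    {H : Type*} [NormedAddCommGroup H] [InnerProductSpace ℝ H] [CompleteSpace H]
    (m : ℕ) (hm : 1 ≤ m)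
    (w : Fin m → ℝ) (hw : ∀ i, w i ∈ Set.Icc (0 : ℝ) 1) (hwsum : ∑ i, w i = 1)
    (C : H → H)
    (G : Fin m → Type*) [∀ i, NormedAddCommGroup (G i)] [∀ i, InnerProductSpace ℝ (G i)]
    [∀ i, CompleteSpace (G i)]
    (A : ∀ i, G i → Set (G i)) (L : ∀ i, H →L[ℝ] G i)
    (x : H) :
    (∃ y : ∀ i, G i, (∀ i, y i ∈ A i (L i x)) ∧
        ∑ i, w i • (L i).adjoint (y i) + C x = 0) ↔
    (∃ (u : ∀ i, G i) (z : Fin m → H), (∀ i, u i ∈ A i (L i x)) ∧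
        (∑ i, w i • z i = 0) ∧ ∀ i, C x + (L i).adjoint (u i) + z i = 0) := by
  constructor
  · rintro ⟨y, hy, hsum⟩
    refine ⟨y, fun i => -(C x + (L i).adjoint (y i)), hy, ?_, fun i => by exact add_neg_cancel _⟩
    have : ∑ i, w i • -(C x + (L i).adjoint (y i))
        = -((∑ i, w i) • C x) - ∑ i, w i • (L i).adjoint (y i) := by
      rw [Finset.sum_smul]
      simp [smul_add, Finset.sum_add_distrib, Finset.sum_neg_distrib]
      abel
    rw [this, hwsum, one_smul]
    have h := hsum
    rw [add_eq_zero_iff_eq_neg] at h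
    rw [h]; abel
  · rintro ⟨u, z, hu, hz, heq⟩
    refine ⟨u, hu, ?_⟩
    have : ∀ i, w i • (L i).adjoint (u i) = w i • (-(C x) - z i) := by
      intro i
      have h := heq i
      have : (L i).adjoint (u i) = -(C x) - z i := by
        rw [← sub_eq_zero]; rw [← h]; abel
      rw [this]
    rw [Finset.sum_congr rfl (fun i _ => this i)]
    have : ∑ i, w i • (-(C x) - z i)
        = (∑ i, w i) • (-(C x)) - ∑ i, w i • z i := by
      rw [Finset.sum_smul]
      simp [smul_sub, Finset.sum_sub_distrib]
    rw [this, hwsum, hz, one_smul]; abel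
end

section
/- Let H and G be real Hilbert spaces, let h : H → ℝ be convex differentiable, let g ∈ Γ_0(G), let L : H → G be bounded linear, let V be a closed vector subspace of H with orthogonal projection P_V, and let K(x,v) = h(x) + ι_V(x) + ⟨Lx,v⟩ − g*(v). Let γ, τ > 0, let U be a self-adjoint positive definite bounded operator on G, and set R = (τU)^{-1} − L P_V L*. Let p ∈ V, v_old ∈ G, and let v₊ = prox^{U^{-1}}_{(τ/γ) g*}(v_old + (τ/γ) U L p), i.e. the unique minimizer of w ↦ (τ/γ) g*(w) + (1/2)⟨U^{-1}(v_old + (τ/γ)ULp − w), v_old + (τ/γ)ULp − w⟩. Let x₊ ∈ V satisfy x₊ − p = γ P_V L*(v_old − v₊). Then for every v ∈ dom g*, γ (K(x₊, v) − K(x₊, v₊)) ≤ (γ²/2)(⟨R(v_old − v), v_old − v⟩ − ⟨R(v₊ − v), v₊ − v⟩ − ⟨R(v₊ − v_old), v₊ − v_old⟩). -/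
open scoped RealInnerProductSpace

/-- The orthogonal projection of `H` onto the closed subspace `V`, as a map `H →L[ℝ] H`. -/
noncomputable def projV {H : Type*} [NormedAddCommGroup H] [InnerProductSpace ℝ H]
    (V : Submodule ℝ H) [V.HasOrthogonalProjection] : H →L[ℝ] H :=
  V.subtypeL.comp (V.orthogonalProjectionOnto)

/-- Fenchel conjugate of an `EReal`-valued function on a real inner product space. -/
noncomputable def fconj {G : Type*} [NormedAddCommGroup G] [InnerProductSpace ℝ G]
    (g : G → EReal) (v : G) : EReal :=
  ⨆ y : G, ((⟪v, y⟫ : ℝ) : EReal) - g y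

open Classical in
/-- The saddle function `K(x,v) = h(x) + ι_V(x) + ⟨Lx, v⟩ − g*(v)` (with values in `EReal`). -/
noncomputable def saddleK {H G : Type*} [NormedAddCommGroup H] [InnerProductSpace ℝ H]
    [NormedAddCommGroup G] [InnerProductSpace ℝ G]
    (h : H → ℝ) (g : G → EReal) (L : H →L[ℝ] G) (V : Submodule ℝ H)
    (x : H) (v : G) : EReal :=
  ((h x : ℝ) : EReal) + (if x ∈ V then (0 : EReal) else ⊤)
    + ((⟪L x, v⟫ : ℝ) : EReal) - fconj g v

private lemma aux_limit (X Y C : ℝ) (h : ∀ t : ℝ, 0 < t → t ≤ 1 → X ≤ Y + t * C) : X ≤ Y := by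
  by_contra hc
  push_neg at hc
  have hC1 : (0:ℝ) < |C| + 1 := by positivity
  have h1 : (0:ℝ) < min 1 ((X - Y) / (2 * (|C| + 1))) :=
    lt_min one_pos (div_pos (by linarith) (by positivity))
  have h2 : min 1 ((X - Y) / (2 * (|C| + 1))) ≤ 1 := min_le_left _ _
  have h3 := h _ h1 h2
  have h4 : min 1 ((X - Y) / (2 * (|C| + 1))) ≤ (X - Y) / (2 * (|C| + 1)) := min_le_right _ _
  have h5 : min 1 ((X - Y) / (2 * (|C| + 1))) * C ≤ min 1 ((X - Y) / (2 * (|C| + 1))) * (|C| + 1) :=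
    mul_le_mul_of_nonneg_left (by linarith [le_abs_self C]) h1.le
  have h6 : min 1 ((X - Y) / (2 * (|C| + 1))) * (|C| + 1)
      ≤ (X - Y) / (2 * (|C| + 1)) * (|C| + 1) := mul_le_mul_of_nonneg_right h4 hC1.le
  have h7 : (X - Y) / (2 * (|C| + 1)) * (|C| + 1) = (X - Y) / 2 := by
    field_simp
  linarith

private lemma quad_expand {G : Type*} [NormedAddCommGroup G] [InnerProductSpace ℝ G]
    (T : G →L[ℝ] G) (hT : ∀ a b : G, ⟪T a, b⟫ = ⟪a, T b⟫) (E d : G) (t : ℝ) :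
    ⟪T (E - t • d), E - t • d⟫ = ⟪T E, E⟫ - 2 * t * ⟪T E, d⟫ + t ^ 2 * ⟪T d, d⟫ := by
  have hsymm : ⟪T d, E⟫ = ⟪T E, d⟫ := by rw [hT]; exact real_inner_comm _ _
  simp only [map_sub, map_smul, inner_sub_left, inner_sub_right,
    real_inner_smul_left, real_inner_smul_right]
  linear_combination (-t) * hsymm

set_option maxHeartbeats 1000000 in
/-- Dual ascent inequality for the saddle function: with
`R = (τU)⁻¹ − L P_V L*`, `v₊ = prox^{U⁻¹}_{(τ/γ)g*}(v_old + (τ/γ)U L p)` and `x₊ ∈ V` with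
`x₊ − p = γ P_V L*(v_old − v₊)`, every `v ∈ dom g*` satisfies
`γ(K(x₊,v) − K(x₊,v₊)) ≤ (γ²/2)(⟨R(v_old−v),v_old−v⟩ − ⟨R(v₊−v),v₊−v⟩ − ⟨R(v₊−v_old),v₊−v_old⟩)`. -/
theorem saddle_dual_ascent
    {H G : Type*} [NormedAddCommGroup H] [InnerProductSpace ℝ H] [CompleteSpace H]
    [NormedAddCommGroup G] [InnerProductSpace ℝ G] [CompleteSpace G]
    (h : H → ℝ) (hconv : ConvexOn ℝ Set.univ h) (hdiff : Differentiable ℝ h)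
    (g : G → EReal)
    (hg_ne_bot : ∀ y : G, g y ≠ ⊥) (hg_proper : ∃ y : G, g y ≠ ⊤)
    (hg_convex : ∀ y z : G, ∀ a b : ℝ, 0 ≤ a → 0 ≤ b → a + b = 1 →
      g (a • y + b • z) ≤ (a : EReal) * g y + (b : EReal) * g z)
    (hg_lsc : LowerSemicontinuous g)
    (L : H →L[ℝ] G) (V : Submodule ℝ H) [V.HasOrthogonalProjection]
    (γ τ : ℝ) (hγ : 0 < γ) (hτ : 0 < τ)
    (U Uinv : G →L[ℝ] G) (hUsa : IsSelfAdjoint U)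
    (hUpos : ∀ z : G, z ≠ 0 → 0 < ⟪U z, z⟫)
    (hUinvU : ∀ z : G, U (Uinv z) = z ∧ Uinv (U z) = z)
    (R : G → G) (hR : ∀ z : G, R z = τ⁻¹ • Uinv z - L (projV V (L.adjoint z)))
    (p : H) (hpV : p ∈ V) (vold : G) (vplus : G)
    (hvplus : ∀ z : G,
      ((τ / γ : ℝ) : EReal) * fconj g vplus
          + ((1 / 2 * ⟪Uinv (vold + (τ / γ) • U (L p) - vplus),
                vold + (τ / γ) • U (L p) - vplus⟫ : ℝ) : EReal)
        ≤ ((τ / γ : ℝ) : EReal) * fconj g z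
          + ((1 / 2 * ⟪Uinv (vold + (τ / γ) • U (L p) - z),
                vold + (τ / γ) • U (L p) - z⟫ : ℝ) : EReal))
    (xplus : H) (hxplusV : xplus ∈ V)
    (hxplus : xplus - p = γ • projV V (L.adjoint (vold - vplus))) :
    ∀ v : G, fconj g v ≠ ⊤ →
      ((γ : ℝ) : EReal) * (saddleK h g L V xplus v - saddleK h g L V xplus vplus)
        ≤ ((γ ^ 2 / 2 * (⟪R (vold - v), vold - v⟫ - ⟪R (vplus - v), vplus - v⟫
              - ⟪R (vplus - vold), vplus - vold⟫) : ℝ) : EReal) := by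
  intro v hvtop
  have hτγ : (0:ℝ) < τ / γ := div_pos hτ hγ
  -- symmetry of U and Uinv
  have hUsym : ∀ a b : G, ⟪U a, b⟫ = ⟪a, U b⟫ := by
    intro a b
    conv_lhs => rw [← hUsa.adjoint_eq]
    exact ContinuousLinearMap.adjoint_inner_left U b a
  have hUinv_sym : ∀ a b : G, ⟪Uinv a, b⟫ = ⟪a, Uinv b⟫ := by
    intro a b
    calc ⟪Uinv a, b⟫ = ⟪Uinv a, U (Uinv b)⟫ := by rw [(hUinvU b).1]
      _ = ⟪U (Uinv a), Uinv b⟫ := (hUsym (Uinv a) (Uinv b)).symm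
      _ = ⟪a, Uinv b⟫ := by rw [(hUinvU a).1]
  have hPsym : ∀ a b : H, ⟪projV V a, b⟫ = ⟪a, projV V b⟫ := by
    intro a b
    exact V.inner_starProjection_left_eq_right a b
  -- fconj is never ⊥
  obtain ⟨y₀, hy₀⟩ := hg_proper
  have fconj_ne_bot : ∀ w : G, fconj g w ≠ ⊥ := by
    intro w hbot
    have h1 : ((⟪w, y₀⟫ : ℝ) : EReal) - g y₀ ≤ fconj g w :=
      le_iSup (fun y => ((⟪w, y⟫ : ℝ) : EReal) - g y) y₀
    rw [hbot, le_bot_iff] at h1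
    rw [← EReal.coe_toReal hy₀ (hg_ne_bot y₀), ← EReal.coe_sub] at h1
    exact EReal.coe_ne_bot _ h1
  set B : ℝ := (fconj g v).toReal with hBdef
  have hB : fconj g v = (B : EReal) := (EReal.coe_toReal hvtop (fconj_ne_bot v)).symm
  have hvp_ne_top : fconj g vplus ≠ ⊤ := by
    intro htop
    have h1 := hvplus v
    rw [htop, hB, EReal.coe_mul_top_of_pos hτγ, EReal.top_add_coe, ← EReal.coe_mul,
      ← EReal.coe_add, top_le_iff] at h1
    exact EReal.coe_ne_top _ h1
  set A : ℝ := (fconj g vplus).toReal with hAdef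
  have hA : fconj g vplus = (A : EReal) := (EReal.coe_toReal hvp_ne_top (fconj_ne_bot vplus)).symm
  have hAy : ∀ y : G, ∀ r : ℝ, g y = (r : EReal) → ⟪vplus, y⟫ - r ≤ A := by
    intro y r hy
    have h1 : ((⟪vplus, y⟫ : ℝ) : EReal) - g y ≤ fconj g vplus :=
      le_iSup (fun y => ((⟪vplus, y⟫ : ℝ) : EReal) - g y) y
    rw [hy, hA, ← EReal.coe_sub, EReal.coe_le_coe_iff] at h1
    exact h1
  have hBy : ∀ y : G, ∀ r : ℝ, g y = (r : EReal) → ⟪v, y⟫ - r ≤ B := by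
    intro y r hy
    have h1 : ((⟪v, y⟫ : ℝ) : EReal) - g y ≤ fconj g v :=
      le_iSup (fun y => ((⟪v, y⟫ : ℝ) : EReal) - g y) y
    rw [hy, hB, ← EReal.coe_sub, EReal.coe_le_coe_iff] at h1
    exact h1
  -- convexity bound for fconj along the segment
  have conv_bound : ∀ t : ℝ, 0 ≤ t → t ≤ 1 →
      fconj g (vplus + t • (v - vplus)) ≤ (((1 - t) * A + t * B : ℝ) : EReal) := by
    intro t ht0 ht1
    refine iSup_le fun y => ?_
    by_cases hy : g y = ⊤
    · rw [hy, EReal.sub_top]; exact bot_le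
    · have hgy : g y = (((g y).toReal : ℝ) : EReal) := (EReal.coe_toReal hy (hg_ne_bot y)).symm
      rw [hgy, ← EReal.coe_sub, EReal.coe_le_coe_iff]
      have h1 := hAy y _ hgy
      have h2 := hBy y _ hgy
      have hip : ⟪vplus + t • (v - vplus), y⟫ = (1 - t) * ⟪vplus, y⟫ + t * ⟪v, y⟫ := by
        rw [inner_add_left, real_inner_smul_left, inner_sub_left]; ring
      rw [hip]
      nlinarith [mul_le_mul_of_nonneg_left h1 (by linarith : (0:ℝ) ≤ 1 - t),
        mul_le_mul_of_nonneg_left h2 ht0]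
  -- the prox inequality, differentiated at v₊ in direction v − v₊
  have star : τ / γ * (A - B)
      ≤ -⟪Uinv (vold + (τ / γ) • U (L p) - vplus), v - vplus⟫ := by
    apply aux_limit _ _ (⟪Uinv (v - vplus), v - vplus⟫ / 2)
    intro t ht0 ht1
    have harg : vold + (τ / γ) • U (L p) - (vplus + t • (v - vplus))
        = (vold + (τ / γ) • U (L p) - vplus) - t • (v - vplus) := by module
    have hsymm : ⟪Uinv (v - vplus), vold + (τ / γ) • U (L p) - vplus⟫
        = ⟪Uinv (vold + (τ / γ) • U (L p) - vplus), v - vplus⟫ := by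
      rw [hUinv_sym]; exact real_inner_comm _ _
    have hqt : ⟪Uinv ((vold + (τ / γ) • U (L p) - vplus) - t • (v - vplus)),
          (vold + (τ / γ) • U (L p) - vplus) - t • (v - vplus)⟫
        = ⟪Uinv (vold + (τ / γ) • U (L p) - vplus), vold + (τ / γ) • U (L p) - vplus⟫
          - 2 * t * ⟪Uinv (vold + (τ / γ) • U (L p) - vplus), v - vplus⟫
          + t ^ 2 * ⟪Uinv (v - vplus), v - vplus⟫ :=
      quad_expand Uinv hUinv_sym _ _ t
    have hcb := conv_bound t ht0.le ht1
    have hne_top : fconj g (vplus + t • (v - vplus)) ≠ ⊤ := by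
      intro htop; rw [htop, top_le_iff] at hcb
      exact EReal.coe_ne_top _ hcb
    have hCt : fconj g (vplus + t • (v - vplus))
        = (((fconj g (vplus + t • (v - vplus))).toReal : ℝ) : EReal) :=
      (EReal.coe_toReal hne_top (fconj_ne_bot _)).symm
    set Ct : ℝ := (fconj g (vplus + t • (v - vplus))).toReal with hCtdef
    have hCt_le : Ct ≤ (1 - t) * A + t * B := by
      rw [hCt, EReal.coe_le_coe_iff] at hcb; exact hcb
    have h1 := hvplus (vplus + t • (v - vplus))
    rw [hA, hCt, harg, hqt] at h1
    have h1' : τ / γ * A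
          + 1 / 2 * ⟪Uinv (vold + (τ / γ) • U (L p) - vplus),
              vold + (τ / γ) • U (L p) - vplus⟫
        ≤ τ / γ * Ct
          + 1 / 2 * (⟪Uinv (vold + (τ / γ) • U (L p) - vplus),
                vold + (τ / γ) • U (L p) - vplus⟫
              - 2 * t * ⟪Uinv (vold + (τ / γ) • U (L p) - vplus), v - vplus⟫
              + t ^ 2 * ⟪Uinv (v - vplus), v - vplus⟫) := by
      exact_mod_cast h1
    have h2 : τ / γ * Ct ≤ τ / γ * ((1 - t) * A + t * B) :=
      mul_le_mul_of_nonneg_left hCt_le hτγ.le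
    have h3 : t * (τ / γ * (A - B))
        ≤ t * (-⟪Uinv (vold + (τ / γ) • U (L p) - vplus), v - vplus⟫
            + t * (⟪Uinv (v - vplus), v - vplus⟫ / 2)) := by nlinarith [h1', h2]
    exact le_of_mul_le_mul_left h3 ht0
  -- multiply by γ²/τ
  have hh := mul_le_mul_of_nonneg_left star (by positivity : (0:ℝ) ≤ γ ^ 2 / τ)
  have heq : γ ^ 2 / τ * (τ / γ * (A - B)) = γ * (A - B) := by
    field_simp
  rw [heq] at hh
  -- algebraic identities
  have hxp : xplus = p + γ • projV V (L.adjoint (vold - vplus)) := by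
    rw [← hxplus]; abel
  have hLx2 : γ * (⟪L xplus, v⟫ - ⟪L xplus, vplus⟫)
      = γ * ⟪L p, v - vplus⟫
        + γ ^ 2 * ⟪L (projV V (L.adjoint (vold - vplus))), v - vplus⟫ := by
    rw [hxp]
    simp only [map_add, map_smul, inner_add_left, real_inner_smul_left, inner_sub_right]
    ring
  have hU1 : Uinv (vold + (τ / γ) • U (L p) - vplus)
      = Uinv (vold - vplus) + (τ / γ) • L p := by
    have h9 : vold + (τ / γ) • U (L p) - vplus = (vold - vplus) + (τ / γ) • U (L p) := by
      module
    rw [h9, map_add, map_smul, (hUinvU (L p)).2]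
  have hUe2 : γ ^ 2 / τ * ⟪Uinv (vold + (τ / γ) • U (L p) - vplus), v - vplus⟫
      = γ ^ 2 / τ * ⟪Uinv (vold - vplus), v - vplus⟫ + γ * ⟪L p, v - vplus⟫ := by
    rw [hU1, inner_add_left, real_inner_smul_left]
    field_simp
  -- symmetry facts for the atoms
  have s1a : ⟪Uinv vold, v⟫ = ⟪Uinv v, vold⟫ := by
    rw [hUinv_sym]; exact real_inner_comm _ _
  have s1b : ⟪Uinv vplus, v⟫ = ⟪Uinv v, vplus⟫ := by
    rw [hUinv_sym]; exact real_inner_comm _ _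
  have s1c : ⟪Uinv vplus, vold⟫ = ⟪Uinv vold, vplus⟫ := by
    rw [hUinv_sym]; exact real_inner_comm _ _
  have hLP : ∀ a b : G, ⟪L (projV V (L.adjoint a)), b⟫ = ⟪L (projV V (L.adjoint b)), a⟫ := by
    intro a b
    rw [← ContinuousLinearMap.adjoint_inner_right L, hPsym, real_inner_comm,
      ← ContinuousLinearMap.adjoint_inner_right L]
  have s2a : ⟪L (projV V (L.adjoint vold)), v⟫ = ⟪L (projV V (L.adjoint v)), vold⟫ := hLP _ _
  have s2b : ⟪L (projV V (L.adjoint vplus)), v⟫ = ⟪L (projV V (L.adjoint v)), vplus⟫ := hLP _ _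
  have s2c : ⟪L (projV V (L.adjoint vplus)), vold⟫ = ⟪L (projV V (L.adjoint vold)), vplus⟫ :=
    hLP _ _
  have keyid : γ ^ 2 / 2 * (⟪R (vold - v), vold - v⟫ - ⟪R (vplus - v), vplus - v⟫
        - ⟪R (vplus - vold), vplus - vold⟫)
      = γ ^ 2 * ⟪L (projV V (L.adjoint (vold - vplus))), v - vplus⟫
        - γ ^ 2 / τ * ⟪Uinv (vold - vplus), v - vplus⟫ := by
    simp only [hR, map_sub, inner_sub_left, inner_sub_right, real_inner_smul_left]
    linear_combination (γ ^ 2 * τ⁻¹ / 2) * s1a - (γ ^ 2 * τ⁻¹ / 2) * s1b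
      + (γ ^ 2 * τ⁻¹ / 2) * s1c - (γ ^ 2 / 2) * s2a + (γ ^ 2 / 2) * s2b - (γ ^ 2 / 2) * s2c
  -- reduce the EReal goal to a real one
  have hs1 : saddleK h g L V xplus v = ((h xplus + ⟪L xplus, v⟫ - B : ℝ) : EReal) := by
    rw [saddleK, if_pos hxplusV, add_zero, hB, ← EReal.coe_add, ← EReal.coe_sub]
  have hs2 : saddleK h g L V xplus vplus = ((h xplus + ⟪L xplus, vplus⟫ - A : ℝ) : EReal) := by
    rw [saddleK, if_pos hxplusV, add_zero, hA, ← EReal.coe_add, ← EReal.coe_sub]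
  rw [hs1, hs2, ← EReal.coe_sub, ← EReal.coe_mul, EReal.coe_le_coe_iff]
  nlinarith [hh, hUe2, hLx2, keyid]
end

section
/- Let H and G be real Hilbert spaces, let β > 0, let B : H → H be β-cocoercive, let L : H → G be bounded linear, let V be a closed vector subspace of H with orthogonal projection P_V, and let γ > 0. Let x̄ ∈ V and v̄ ∈ G satisfy −P_V L* v̄ = P_V B x̄. Let x_n ∈ H, v₊ ∈ G, and set x₊ = P_V(x_n − γ(L* v₊ + B x_n)). Then 2⟨P_V L*(v₊ − v̄), x₊ − x̄⟩ ≤ (1/γ)(‖x_n − x̄‖² − ‖x₊ − x̄‖²) − (1/γ − 1/β)‖x_n − x₊‖² − β ‖B x_n − B x̄‖². -/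
open scoped RealInnerProductSpace

lemma projV_inner_eq {H : Type*} [NormedAddCommGroup H] [InnerProductSpace ℝ H]
    (V : Submodule ℝ H) [V.HasOrthogonalProjection] (u w : H) (hw : w ∈ V) :
    ⟪projV V u, w⟫ = ⟪u, w⟫ := by
  have h0 : ⟪w, u - (V.orthogonalProjectionOnto u : H)⟫ = 0 :=
    (Submodule.mem_orthogonal _ _).1 (V.sub_starProjection_mem_orthogonal u) w hw
  rw [inner_sub_right] at h0
  have : ⟪w, (V.orthogonalProjectionOnto u : H)⟫ = ⟪w, u⟫ := by linarith
  simp [projV, real_inner_comm, this]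
  rw [real_inner_comm w u]; exact this

lemma projV_mem {H : Type*} [NormedAddCommGroup H] [InnerProductSpace ℝ H]
    (V : Submodule ℝ H) [V.HasOrthogonalProjection] (u : H) : projV V u ∈ V := by
  simp [projV]


/-- One-step primal descent estimate for a `β`-cocoercive operator `B`:
if `x̄ ∈ V`, `−P_V L* v̄ = P_V B x̄`, and `x₊ = P_V(xₙ − γ(L* v₊ + B xₙ))`, then
`2⟨P_V L*(v₊ − v̄), x₊ − x̄⟩ ≤ (1/γ)(‖xₙ−x̄‖² − ‖x₊−x̄‖²) − (1/γ − 1/β)‖xₙ−x₊‖² − β‖Bxₙ−Bx̄‖²`. -/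
theorem primal_step_estimate
    {H G : Type*} [NormedAddCommGroup H] [InnerProductSpace ℝ H] [CompleteSpace H]
    [NormedAddCommGroup G] [InnerProductSpace ℝ G] [CompleteSpace G]
    (β : ℝ) (hβ : 0 < β)
    (B : H → H) (hB : ∀ x y : H, β * ‖B x - B y‖ ^ 2 ≤ ⟪B x - B y, x - y⟫)
    (L : H →L[ℝ] G)
    (V : Submodule ℝ H) [V.HasOrthogonalProjection]
    (γ : ℝ) (hγ : 0 < γ)
    (xbar : H) (hxbar : xbar ∈ V) (vbar : G)
    (hopt : -(projV V (L.adjoint vbar)) = projV V (B xbar))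
    (xn : H) (vplus : G) (xplus : H)
    (hxplus : xplus = projV V (xn - γ • (L.adjoint vplus + B xn))) :
    2 * ⟪projV V (L.adjoint (vplus - vbar)), xplus - xbar⟫
      ≤ (1 / γ) * (‖xn - xbar‖ ^ 2 - ‖xplus - xbar‖ ^ 2)
        - (1 / γ - 1 / β) * ‖xn - xplus‖ ^ 2
        - β * ‖B xn - B xbar‖ ^ 2 := by
  set w := xplus - xbar with hw_def
  have hxplusV : xplus ∈ V := by rw [hxplus]; exact projV_mem V _
  have hw : w ∈ V := Submodule.sub_mem V hxplusV hxbar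
  set A1 := ⟪L.adjoint vplus, w⟫ with hA1
  set A2 := ⟪L.adjoint vbar, w⟫ with hA2
  set C := ⟪B xn, w⟫ with hC
  set D := ⟪B xbar, w⟫ with hD
  set b := B xn - B xbar with hb
  set S := ⟪b, xn - xbar⟫ with hS
  set T := ⟪b, xn - xplus⟫ with hT
  -- F1 : ⟪xn - xplus, w⟫ = γ * (A1 + C)
  have hx : ⟪xplus, w⟫ = ⟪xn, w⟫ - γ * (A1 + C) := by
    rw [hxplus, projV_inner_eq V _ w hw]
    rw [inner_sub_left, real_inner_smul_left, inner_add_left]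
  have F1 : ⟪xn - xplus, w⟫ = γ * (A1 + C) := by
    rw [inner_sub_left]; linarith
  -- F2 : A2 + D = 0
  have F2 : A2 + D = 0 := by
    have h2 : ⟪-(projV V (L.adjoint vbar)), w⟫ = ⟪projV V (B xbar), w⟫ := by rw [hopt]
    rw [inner_neg_left, projV_inner_eq V _ w hw, projV_inner_eq V _ w hw] at h2
    linarith
  -- F3 : lhs inner = A1 - A2
  have F3 : ⟪projV V (L.adjoint (vplus - vbar)), w⟫ = A1 - A2 := by
    rw [projV_inner_eq V _ w hw, map_sub, inner_sub_left]
  -- F4 : cosine identity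
  have F4 : ‖xn - xbar‖ ^ 2 = ‖xn - xplus‖ ^ 2 + 2 * ⟪xn - xplus, w⟫ + ‖w‖ ^ 2 := by
    have hsplit : xn - xbar = (xn - xplus) + w := by rw [hw_def]; abel
    rw [hsplit, norm_add_sq_real]
  -- F5 : cocoercivity
  have F5 : β * ‖b‖ ^ 2 ≤ S := hB xn xbar
  -- F6 : Young
  have F6 : 2 * T ≤ β * ‖b‖ ^ 2 + (1 / β) * ‖xn - xplus‖ ^ 2 := by
    have hkey : (1 / β) * ‖β • b - (xn - xplus)‖ ^ 2
        = β * ‖b‖ ^ 2 - 2 * T + (1 / β) * ‖xn - xplus‖ ^ 2 := by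
      rw [norm_sub_sq_real, norm_smul, real_inner_smul_left]
      rw [Real.norm_eq_abs, abs_of_pos hβ, mul_pow]
      field_simp
      ring
    nlinarith [sq_nonneg ‖β • b - (xn - xplus)‖, one_div_pos.2 hβ,
      mul_nonneg (le_of_lt (one_div_pos.2 hβ)) (sq_nonneg ‖β • b - (xn - xplus)‖)]
  -- F7 : ⟪b, w⟫ = S - T
  have F7 : C - D = S - T := by
    have : ⟪b, w⟫ = S - T := by
      rw [hS, hT, ← inner_sub_right]
      congr 1
      rw [hw_def]; abel
    rw [← this, hb, inner_sub_left]
  -- final reduction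
  have final : 2 * (A1 - A2) ≤ 2 * (A1 + C) + (1 / β) * ‖xn - xplus‖ ^ 2 - β * ‖b‖ ^ 2 := by
    linarith
  have heq : (1 / γ) * (‖xn - xbar‖ ^ 2 - ‖w‖ ^ 2) - (1 / γ - 1 / β) * ‖xn - xplus‖ ^ 2
      = 2 * (A1 + C) + (1 / β) * ‖xn - xplus‖ ^ 2 := by
    have hN : ‖xn - xbar‖ ^ 2 = ‖xn - xplus‖ ^ 2 + 2 * (γ * (A1 + C)) + ‖w‖ ^ 2 := by
      rw [F4, F1]
    rw [hN]
    field_simp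
    ring
  rw [F3]
  linarith
end

section
/- Let H be a real Hilbert space, m ≥ 1, ω_1,…,ω_m ∈ [0,1] with ∑_{i=1}^m ω_i = 1, let C : H → H, and for each i let G_i be a real Hilbert space, A_i : G_i → 2^{G_i} a set-valued operator, and L_i : H → G_i bounded linear. Define on 𝓗 = H^m with the weighted inner product the diagonal subspace 𝐕 with normal cone N_𝐕, and the operators 𝐂, 𝐋, 𝐋*, 𝐀 componentwise as in the product-space reformulation. Then for 𝐯 = (v_1,…,v_m) ∈ G_1 × ⋯ × G_m, the inclusion 0 ∈ −𝐋 (N_𝐕 + 𝐂)^{-1}(−𝐋* 𝐯) + 𝐀^{-1} 𝐯 holds if and only if there exists x ∈ H such that −∑_{i=1}^m ω_i L_i* v_i = C x and v_i ∈ A_i(L_i x) for every i ∈ {1,…,m}, i.e. if and only if 𝐯 belongs to the dual solution set 𝓓_1 of the composite inclusion problem. -/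
open scoped RealInnerProductSpace BigOperators

/-- Product-space reformulation of the dual inclusion: with `𝐕` the diagonal
subspace of `H^m` (weighted inner product `⟨𝐱,𝐲⟩ = ∑ᵢ ωᵢ⟨xᵢ,yᵢ⟩`, so `𝐕^⊥ = {𝐰 : ∑ᵢ ωᵢ wᵢ = 0}`
and `N_𝐕 𝐱 = 𝐕^⊥` for `𝐱 ∈ 𝐕`), the inclusion `0 ∈ −𝐋 (N_𝐕 + 𝐂)⁻¹(−𝐋* 𝐯) + 𝐀⁻¹ 𝐯`
(i.e. there is `𝐱` with `−𝐋*𝐯 ∈ N_𝐕 𝐱 + 𝐂 𝐱` and `𝐋 𝐱 ∈ 𝐀⁻¹ 𝐯`) holds iff there exists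
`x ∈ H` with `−∑ᵢ ωᵢ Lᵢ* vᵢ = C x` and `vᵢ ∈ Aᵢ(Lᵢ x)` for every `i`, i.e. iff `𝐯 ∈ 𝓓₁`. -/
theorem product_space_dual_reformulation
    {H : Type*} [NormedAddCommGroup H] [InnerProductSpace ℝ H] [CompleteSpace H]
    (m : ℕ) (hm : 1 ≤ m)
    (w : Fin m → ℝ) (hw : ∀ i, w i ∈ Set.Icc (0 : ℝ) 1) (hwsum : ∑ i, w i = 1)
    (C : H → H)
    (G : Fin m → Type*) [∀ i, NormedAddCommGroup (G i)] [∀ i, InnerProductSpace ℝ (G i)]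
    [∀ i, CompleteSpace (G i)]
    (A : ∀ i, G i → Set (G i)) (L : ∀ i, H →L[ℝ] G i)
    (v : ∀ i, G i) :
    (∃ (x : Fin m → H) (z : Fin m → H),
        (∀ i j, x i = x j) ∧                             -- 𝐱 ∈ 𝐕
        (∑ i, w i • z i = 0) ∧                           -- 𝐰 ∈ 𝐕^⊥, so −𝐋*𝐯 ∈ N_𝐕𝐱 + 𝐂𝐱
        (∀ i, -((L i).adjoint (v i)) = z i + C (x i)) ∧
        (∀ i, v i ∈ A i (L i (x i)))) ↔                  -- 𝐋𝐱 ∈ 𝐀⁻¹𝐯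
    (∃ x : H, -(∑ i, w i • (L i).adjoint (v i)) = C x ∧ ∀ i, v i ∈ A i (L i x)) := by
  have key : ∀ (c : H) (f : Fin m → H),
      ∑ i, w i • (-(f i) - c) = -(∑ i, w i • f i) - c := by
    intro c f
    simp only [smul_sub, smul_neg, Finset.sum_sub_distrib, Finset.sum_neg_distrib,
      ← Finset.sum_smul, hwsum, one_smul]
  constructor
  · rintro ⟨x, z, hconst, hsum, hz, hA⟩
    have i0 : Fin m := ⟨0, hm⟩
    refine ⟨x i0, ?_, fun i => (hconst i i0 ▸ hA i)⟩
    have heq : ∀ i, (L i).adjoint (v i) = -(z i) - C (x i0) := by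
      intro i
      have h := hz i
      rw [hconst i i0, neg_eq_iff_eq_neg] at h
      rw [h]; abel
    calc -(∑ i, w i • (L i).adjoint (v i))
        = -(∑ i, w i • (-(z i) - C (x i0))) := by
          congr 1; exact Finset.sum_congr rfl fun i _ => by rw [heq i]
      _ = -(-(∑ i, w i • z i) - C (x i0)) := by rw [key]
      _ = C (x i0) := by rw [hsum]; abel
  · rintro ⟨x, hx, hA⟩
    refine ⟨fun _ => x, fun i => -((L i).adjoint (v i)) - C x, fun _ _ => rfl, ?_,
      fun i => by beta_reduce; abel, hA⟩
    have : ∑ i, w i • (-((L i).adjoint (v i)) - C x)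
        = -(∑ i, w i • (L i).adjoint (v i)) - C x := key _ _
    rw [this, hx]; abel
end
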